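/- Let M be a σ-compact Hausdorff smooth manifold without boundary modeled on a finite-dimensional real normed space, let {U_i}_{i∈ι} be an open cover of M, and let F be a real Banach space. Suppose that for every pair of indices (i,j) we are given a function h_{ij} : M → F that is smooth on U_{ij}, and that h_{jk} − h_{ik} + h_{ij} = 0 holds on U_{ijk} for every triple of indices (i,j,k). Then there exist functions u_i : M → F, each smooth on U_i, such that h_{ij} = u_j − u_i holds on U_{ij} for every pair (i,j). -/

import Mathlib

open scoped Manifold

/-- On a σ-compact Hausdorff finite-dimensional smooth manifold, every smooth Banach-space-valued
Čech 1-cocycle relative to an open cover is a Čech coboundary: if `h j k - h i k + h i j = 0` on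
triple intersections then there exist functions `u i`, smooth on `U i`, with
`h i j = u j - u i` on double intersections. -/
theorem cech_one_cocycle_is_coboundary
    {E : Type*} [NormedAddCommGroup E] [NormedSpace ℝ E] [FiniteDimensional ℝ E]
    {M : Type*} [TopologicalSpace M] [ChartedSpace E M]
    [IsManifold (𝓘(ℝ, E)) ((⊤ : ℕ∞) : WithTop ℕ∞) M] [SigmaCompactSpace M] [T2Space M]
    {ι : Type*} (U : ι → Set M) (hUopen : ∀ i, IsOpen (U i))
    (hUcover : (⋃ i, U i) = Set.univ)
    {F : Type*} [NormedAddCommGroup F] [NormedSpace ℝ F] [CompleteSpace F]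
    (h : ι → ι → M → F)
    (hsmooth : ∀ i j, ContMDiffOn (𝓘(ℝ, E)) (𝓘(ℝ, F)) (⊤ : ℕ∞) (h i j) (U i ∩ U j))
    (hcocycle : ∀ i j k, ∀ x ∈ U i ∩ U j ∩ U k, h j k x - h i k x + h i j x = 0) :
    ∃ u : ι → M → F,
      (∀ i, ContMDiffOn (𝓘(ℝ, E)) (𝓘(ℝ, F)) (⊤ : ℕ∞) (u i) (U i)) ∧
      ∀ i j, ∀ x ∈ U i ∩ U j, h i j x = u j x - u i x := by
  obtain ⟨ρ, hρ⟩ := SmoothPartitionOfUnity.exists_isSubordinate (𝓘(ℝ, E))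
    isClosed_univ U hUopen (hUcover ▸ subset_rfl)
  refine ⟨fun i x => ∑ᶠ k, ρ k x • h k i x, ?_, ?_⟩
  · intro i
    intro x hx
    refine ContMDiffAt.contMDiffWithinAt ?_
    refine ρ.contMDiffAt_finsum fun k hk => ?_
    have hxk : x ∈ U k := hρ k hk
    exact ((hsmooth k i).contMDiffAt
      (((hUopen k).inter (hUopen i)).mem_nhds ⟨hxk, hx⟩))
  · intro i j x hx
    have hfin : ∀ m : ι, (Function.support fun k => ρ k x • h k m x).Finite := by
      intro m
      refine (ρ.locallyFinite.point_finite x).subset ?_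
      intro k hk
      have : ρ k x ≠ 0 := fun h0 => hk (by simp [h0])
      exact this
    rw [← finsum_sub_distrib (hfin j) (hfin i)]
    have : ∀ k, ρ k x • h k j x - ρ k x • h k i x = ρ k x • h i j x := by
      intro k
      by_cases hk : ρ k x = 0
      · simp [hk]
      · have hxk : x ∈ U k := hρ k (subset_closure (by exact hk))
        have hc := hcocycle k i j x ⟨⟨hxk, hx.1⟩, hx.2⟩
        rw [← smul_sub]
        congr 1
        have h0 : h k j x - h k i x - h i j x = 0 := by
          rw [← neg_eq_zero, ← hc]; abel
        exact sub_eq_zero.mp h0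
    rw [finsum_congr this]
    have hsupp : (Function.support fun k => ρ k x).Finite := by
      refine (ρ.locallyFinite.point_finite x).subset ?_
      exact fun k hk => hk
    rw [← finsum_smul' hsupp, ρ.sum_eq_one (Set.mem_univ x), one_smul]
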